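/- (Countable additivity for the measure game.) Let ε_n ≥ 0 for all n ∈ ω with ∑_n ε_n = ε < 1, and let A_n ⊆ 2^ω be sets such that player II has a winning strategy in the measure game G(ε_n, A_n) for every n. Then player II has a winning strategy in G(ε, A) where A = ⋂_n A_n. -/

import Mathlib

open MeasureTheory

namespace MeasureGame

/-- Cantor space `2^ω`. -/
abbrev Cantor : Type := ℕ → Bool

/-- The basic cylinder set `N_t` determined by a finite binary string `t`. -/
def cyl (t : List Bool) : Set Cantor := {x | ∀ i : Fin t.length, x i.1 = t.get i}

/-- A round of the measure game: player I's pair of rationals, then player II's bit. -/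
abbrev GRound : Type := (ℚ × ℚ) × Bool

/-- A strategy for player I in the measure game. -/
abbrev StratI : Type := List GRound → ℚ × ℚ

/-- A strategy for player II in the measure game. -/
abbrev StratII : Type := List GRound → ℚ × ℚ → Bool

/-- A run of the measure game. -/
abbrev Run : Type := ℕ → GRound

/-- The history (list of completed rounds) before round `n`. -/
def hist (r : Run) (n : ℕ) : List GRound := (List.range n).map r

/-- Player II's bit at round `n`. -/
def bits (r : Run) (n : ℕ) : Bool := (r n).2

/-- The finite binary string of player II's first `n` bits. -/
def path (r : Run) (n : ℕ) : List Bool := (List.range n).map (bits r)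

/-- The value player I assigned at round `n` to the one-bit extension of the current path by `b`. -/
def valI (r : Run) (n : ℕ) (b : Bool) : ℚ := if b then (r n).1.2 else (r n).1.1

/-- The value selected by player II's move at round `n`. -/
def sel (r : Run) (n : ℕ) : ℚ := valI r n (bits r n)

/-- Legality requirements on the single value player I assigned to `path r n ++ [b]`:
it is nonnegative, at most `μ(N_{t⌢b})`, and strictly below it when the latter is positive. -/
def mOK (μ : Measure Cantor) (r : Run) (n : ℕ) (b : Bool) : Prop :=
  0 ≤ valI r n b ∧ ((valI r n b : ℝ) ≤ (μ (cyl (path r n ++ [b]))).toReal) ∧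
    (0 < (μ (cyl (path r n ++ [b]))).toReal → (valI r n b : ℝ) < (μ (cyl (path r n ++ [b]))).toReal)

/-- Player I's move at round `n` of a run is legal (for the game `G(s, ·)`). -/
def IOK (μ : Measure Cantor) (s : ℝ) (r : Run) : ℕ → Prop
  | 0 => mOK μ r 0 false ∧ mOK μ r 0 true ∧ s < ((r 0).1.1 : ℝ) + ((r 0).1.2 : ℝ)
  | (n + 1) => mOK μ r (n + 1) false ∧ mOK μ r (n + 1) true ∧
      (r (n + 1)).1.1 + (r (n + 1)).1.2 = sel r n

/-- Player II's move at round `n` of a run is legal: the selected value is nonzero. -/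
def IIOK (r : Run) (n : ℕ) : Prop := sel r n ≠ 0

/-- The run `r` is consistent with player I's strategy `σ`. -/
def ConsI (σ : StratI) (r : Run) : Prop := ∀ n, (r n).1 = σ (hist r n)

/-- The run `r` is consistent with player II's strategy `τ`. -/
def ConsII (τ : StratII) (r : Run) : Prop := ∀ n, (r n).2 = τ (hist r n) (r n).1

/-- Player II wins the run `r` of `G(s, A)`: either player I is the first to break a rule,
or all rules are followed and the sequence of II's bits belongs to `A`. -/
def IIWinsRun (μ : Measure Cantor) (s : ℝ) (A : Set Cantor) (r : Run) : Prop :=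
  (∃ n, (∀ m < n, IOK μ s r m ∧ IIOK r m) ∧ ¬ IOK μ s r n) ∨
    ((∀ n, IOK μ s r n ∧ IIOK r n) ∧ bits r ∈ A)

/-- Player I has a winning strategy in the measure game `G(s, A)`. -/
def WinsI (μ : Measure Cantor) (s : ℝ) (A : Set Cantor) : Prop :=
  ∃ σ : StratI, ∀ r : Run, ConsI σ r → ¬ IIWinsRun μ s A r

/-- Player II has a winning strategy in the measure game `G(s, A)`. -/
def WinsII (μ : Measure Cantor) (s : ℝ) (A : Set Cantor) : Prop :=
  ∃ τ : StratII, ∀ r : Run, ConsII τ r → IIWinsRun μ s A r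

/-- The outer measure `μ*(A) = inf {μ(U) : U open, A ⊆ U}`. -/
noncomputable def outerM (μ : Measure Cantor) (A : Set Cantor) : ℝ :=
  sInf {v : ℝ | ∃ U : Set Cantor, IsOpen U ∧ A ⊆ U ∧ v = (μ U).toReal}

/-- The inner measure `μ_*(A) = sup {μ(F) : F closed, F ⊆ A}`. -/
noncomputable def innerM (μ : Measure Cantor) (A : Set Cantor) : ℝ :=
  sSup {v : ℝ | ∃ F : Set Cantor, IsClosed F ∧ F ⊆ A ∧ v = (μ F).toReal}


/-! ### Auxiliary: cylinder measures -/

noncomputable def Mre (μ : Measure Cantor) (t : List Bool) : ℝ := (μ (cyl t)).toReal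

lemma Mre_nonneg (μ : Measure Cantor) (t : List Bool) : 0 ≤ Mre μ t :=
  ENNReal.toReal_nonneg

lemma cyl_nil : cyl [] = (Set.univ : Set Cantor) := by
  ext x; simp [cyl]

lemma measurableSet_cyl (t : List Bool) : MeasurableSet (cyl t) := by
  have : cyl t = ⋂ i : Fin t.length, {x : Cantor | x i.1 = t.get i} := by
    ext x; simp [cyl, Set.mem_iInter]
  rw [this]
  refine MeasurableSet.iInter fun i => ?_
  have : {x : Cantor | x i.1 = t.get i} = (fun x : Cantor => x i.1) ⁻¹' {t.get i} := rfl
  rw [this]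
  exact (measurable_pi_apply i.1) (measurableSet_singleton (t.get i))

lemma cyl_concat (t : List Bool) (b : Bool) :
    cyl (t ++ [b]) = cyl t ∩ {x : Cantor | x t.length = b} := by
  ext x
  constructor
  · intro hx
    constructor
    · intro i
      have hi : (i : ℕ) < (t ++ [b]).length := by
        simp
      have := hx ⟨i.1, hi⟩
      simpa [List.get_eq_getElem, List.getElem_append_left i.2] using this
    · have hi : t.length < (t ++ [b]).length := by simp
      have := hx ⟨t.length, hi⟩
      simpa [List.get_eq_getElem, List.getElem_concat_length] using this
  · rintro ⟨h1, h2⟩ i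
    rcases Nat.lt_or_ge i.1 t.length with h | h
    · have := h1 ⟨i.1, h⟩
      simpa [List.get_eq_getElem, List.getElem_append_left h] using this
    · have hi : (i : ℕ) < t.length + 1 := by have := i.2; simpa using this
      have hieq : (i : ℕ) = t.length := by omega
      have : x i.1 = b := by rw [hieq]; exact h2
      rw [this]
      simp only [List.get_eq_getElem]
      rw [List.getElem_append_right h]
      simp

lemma Mre_split (μ : Measure Cantor) [IsProbabilityMeasure μ] (t : List Bool) :
    Mre μ t = Mre μ (t ++ [false]) + Mre μ (t ++ [true]) := by
  have h0 : cyl (t ++ [false]) = cyl t ∩ {x : Cantor | x t.length = false} := cyl_concat t false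
  have h1 : cyl (t ++ [true]) = cyl t ∩ {x : Cantor | x t.length = true} := cyl_concat t true
  have hdisj : Disjoint (cyl (t ++ [false])) (cyl (t ++ [true])) := by
    rw [h0, h1]
    apply Set.disjoint_left.2
    rintro x ⟨-, hx0⟩ ⟨-, hx1⟩
    simp at hx0 hx1
    rw [hx0] at hx1; exact absurd hx1 (by simp)
  have hunion : cyl (t ++ [false]) ∪ cyl (t ++ [true]) = cyl t := by
    rw [h0, h1, ← Set.inter_union_distrib_left]
    have : {x : Cantor | x t.length = false} ∪ {x : Cantor | x t.length = true} = Set.univ := by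
      ext x; rcases Bool.dichotomy (x t.length) with h | h <;> simp [h]
    rw [this, Set.inter_univ]
  have hmeas : μ (cyl (t ++ [false]) ∪ cyl (t ++ [true])) =
      μ (cyl (t ++ [false])) + μ (cyl (t ++ [true])) :=
    measure_union hdisj (measurableSet_cyl _)
  rw [hunion] at hmeas
  unfold Mre
  rw [hmeas, ENNReal.toReal_add (measure_ne_top μ _) (measure_ne_top μ _)]

lemma Mre_nil (μ : Measure Cantor) [IsProbabilityMeasure μ] : Mre μ [] = 1 := by
  unfold Mre; rw [cyl_nil]; simp

/-! ### Auxiliary: history and path bookkeeping -/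

lemma hist_zero (r : Run) : hist r 0 = [] := rfl

lemma hist_succ (r : Run) (n : ℕ) : hist r (n + 1) = hist r n ++ [r n] := by
  unfold hist; rw [List.range_succ, List.map_append]; rfl

lemma hist_length (r : Run) (n : ℕ) : (hist r n).length = n := by
  simp [hist]

lemma path_zero (r : Run) : path r 0 = [] := rfl

lemma path_succ (r : Run) (n : ℕ) : path r (n + 1) = path r n ++ [bits r n] := by
  unfold path; rw [List.range_succ, List.map_append]; rfl

lemma path_length (r : Run) (n : ℕ) : (path r n).length = n := by
  simp [path]

lemma hist_congr {r1 r2 : Run} (n : ℕ) (h : ∀ m < n, r1 m = r2 m) :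
    hist r1 n = hist r2 n := by
  unfold hist
  apply List.map_congr_left
  intro m hm
  exact h m (List.mem_range.1 hm)

lemma path_congr {r1 r2 : Run} (n : ℕ) (h : ∀ m < n, r1 m = r2 m) :
    path r1 n = path r2 n := by
  unfold path
  apply List.map_congr_left
  intro m hm
  unfold bits; rw [h m (List.mem_range.1 hm)]

/-- `compOK`: a single rational is a legal value for child `t ++ [b]`. -/
def compOK (μ : Measure Cantor) (t : List Bool) (b : Bool) (q : ℚ) : Prop :=
  0 ≤ q ∧ (q : ℝ) ≤ Mre μ (t ++ [b]) ∧ (0 < Mre μ (t ++ [b]) → (q : ℝ) < Mre μ (t ++ [b]))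

/-- `Vok`: a rational is a coherent value at node `t`. -/
def Vok (μ : Measure Cantor) (t : List Bool) (v : ℚ) : Prop :=
  0 ≤ v ∧ (v : ℝ) ≤ Mre μ t ∧ (0 < Mre μ t → (v : ℝ) < Mre μ t)

lemma compOK_Vok {μ : Measure Cantor} {t : List Bool} {b : Bool} {q : ℚ}
    (h : compOK μ t b q) : Vok μ (t ++ [b]) q := h

lemma mOK_iff_compOK (μ : Measure Cantor) (r : Run) (n : ℕ) (b : Bool) :
    mOK μ r n b ↔ compOK μ (path r n) b (valI r n b) := Iff.rfl

lemma IOK_zero_iff (μ : Measure Cantor) (s : ℝ) (r : Run) :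
    IOK μ s r 0 ↔ compOK μ (path r 0) false ((r 0).1.1) ∧
      compOK μ (path r 0) true ((r 0).1.2) ∧ s < ((r 0).1.1 : ℝ) + ((r 0).1.2 : ℝ) := by
  rfl

lemma IOK_succ_iff (μ : Measure Cantor) (s : ℝ) (r : Run) (n : ℕ) :
    IOK μ s r (n + 1) ↔ compOK μ (path r (n + 1)) false ((r (n + 1)).1.1) ∧
      compOK μ (path r (n + 1)) true ((r (n + 1)).1.2) ∧
      (r (n + 1)).1.1 + (r (n + 1)).1.2 = sel r n := by
  rfl

lemma IOK_congr {μ : Measure Cantor} {s : ℝ} {r1 r2 : Run} (n : ℕ)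
    (h : ∀ m ≤ n, r1 m = r2 m) : IOK μ s r1 n ↔ IOK μ s r2 n := by
  have hp : path r1 n = path r2 n := path_congr n (fun m hm => h m hm.le)
  have hr : r1 n = r2 n := h n le_rfl
  cases n with
  | zero =>
    rw [IOK_zero_iff, IOK_zero_iff, hp, hr]
  | succ k =>
    have hsel : sel r1 k = sel r2 k := by
      unfold sel valI bits; rw [h k (Nat.le_succ k)]
    rw [IOK_succ_iff, IOK_succ_iff, hp, hr, hsel]

/-- Building a run from a list-strategy. -/
def histOf (F : List GRound → GRound) : ℕ → List GRound
  | 0 => []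
  | n + 1 => histOf F n ++ [F (histOf F n)]

def runOf (F : List GRound → GRound) : Run := fun n => F (histOf F n)

lemma hist_runOf (F : List GRound → GRound) (n : ℕ) : hist (runOf F) n = histOf F n := by
  induction n with
  | zero => rfl
  | succ k ih => rw [hist_succ, ih]; rfl

/-- Path and last-selection of a history list. -/
def pathL (h : List GRound) : List Bool := h.map (fun g => g.2)

def selL (g : GRound) : ℚ := if g.2 then g.1.2 else g.1.1

def lastSel (h : List GRound) : ℚ := ((h.getLast?).map selL).getD 0

lemma pathL_hist (r : Run) (n : ℕ) : pathL (hist r n) = path r n := by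
  unfold pathL hist path bits
  rw [List.map_map]; rfl

lemma lastSel_concat (h : List GRound) (g : GRound) : lastSel (h ++ [g]) = selL g := by
  unfold lastSel
  rw [List.getLast?_concat]; rfl

lemma lastSel_hist_succ (r : Run) (n : ℕ) : lastSel (hist r (n + 1)) = sel r n := by
  rw [hist_succ, lastSel_concat]; rfl

/-! ### Auxiliary: existence of legal moves, and extension of runs -/

lemma ext_exists (μ : Measure Cantor) [IsProbabilityMeasure μ] (t : List Bool) (v : ℚ)
    (hv : Vok μ t v) :
    ∃ mv : ℚ × ℚ, mv.1 + mv.2 = v ∧ compOK μ t false mv.1 ∧ compOK μ t true mv.2 := by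
  obtain ⟨hv0, hvle, hvlt⟩ := hv
  have hM0 : 0 ≤ Mre μ (t ++ [false]) := Mre_nonneg μ _
  have hM1 : 0 ≤ Mre μ (t ++ [true]) := Mre_nonneg μ _
  have hsplit : Mre μ t = Mre μ (t ++ [false]) + Mre μ (t ++ [true]) := Mre_split μ t
  rcases le_or_gt (Mre μ t) 0 with hM | hM
  · have hv00 : v = 0 := le_antisymm (by exact_mod_cast hvle.trans hM) hv0
    exact ⟨(0, 0), by simp [hv00],
      ⟨le_rfl, by simpa using hM0, fun h => by simpa using h⟩,
      ⟨le_rfl, by simpa using hM1, fun h => by simpa using h⟩⟩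
  · have hvltM : (v : ℝ) < Mre μ (t ++ [false]) + Mre μ (t ++ [true]) := by
      rw [← hsplit]; exact hvlt hM
    rcases le_or_gt (Mre μ (t ++ [false])) 0 with h0 | h0
    · have hM0z : Mre μ (t ++ [false]) = 0 := le_antisymm h0 hM0
      refine ⟨(0, v), by simp, ⟨le_rfl, by simpa using hM0, fun h => by simpa using h⟩,
        ⟨hv0, ?_, fun _ => ?_⟩⟩
      · exact le_of_lt (by simpa [hM0z] using hvltM)
      · simpa [hM0z] using hvltM
    rcases le_or_gt (Mre μ (t ++ [true])) 0 with h1 | h1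
    · have hM1z : Mre μ (t ++ [true]) = 0 := le_antisymm h1 hM1
      refine ⟨(v, 0), by simp, ⟨hv0, ?_, fun _ => ?_⟩,
        ⟨le_rfl, by simpa using hM1, fun h => by simpa using h⟩⟩
      · exact le_of_lt (by simpa [hM1z] using hvltM)
      · simpa [hM1z] using hvltM
    · rcases eq_or_lt_of_le hv0 with hveq | hvpos
      · exact ⟨(0, 0), by simp [← hveq],
          ⟨le_rfl, by simpa using hM0, fun _ => by simpa using h0⟩,
          ⟨le_rfl, by simpa using hM1, fun _ => by simpa using h1⟩⟩
      · have hlt : max 0 ((v : ℝ) - Mre μ (t ++ [true])) < min (v : ℝ) (Mre μ (t ++ [false])) := by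
          apply max_lt
          · exact lt_min (by exact_mod_cast hvpos) h0
          · exact lt_min (by linarith) (by linarith)
        obtain ⟨q, hq1, hq2⟩ := exists_rat_btwn hlt
        have hq0 : (0 : ℝ) ≤ (q : ℝ) := le_of_lt (lt_of_le_of_lt (le_max_left _ _) hq1)
        have hqv : (q : ℝ) < (v : ℝ) := lt_of_lt_of_le hq2 (min_le_left _ _)
        have hqM0 : (q : ℝ) < Mre μ (t ++ [false]) := lt_of_lt_of_le hq2 (min_le_right _ _)
        have hqM1 : (v : ℝ) - (q : ℝ) < Mre μ (t ++ [true]) := by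
          have := lt_of_le_of_lt (le_max_right 0 ((v : ℝ) - Mre μ (t ++ [true]))) hq1
          linarith
        refine ⟨(q, v - q), by ring, ⟨by exact_mod_cast hq0, le_of_lt hqM0, fun _ => hqM0⟩,
          ⟨?_, ?_, fun _ => ?_⟩⟩
        · show 0 ≤ v - q
          have : q ≤ v := by exact_mod_cast le_of_lt hqv
          linarith
        · show ((v - q : ℚ) : ℝ) ≤ Mre μ (t ++ [true])
          push_cast; linarith
        · show ((v - q : ℚ) : ℝ) < Mre μ (t ++ [true])
          push_cast; linarith

open Classical in
/-- A canonical legal continuation move. -/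
noncomputable def extMove (μ : Measure Cantor) (t : List Bool) (v : ℚ) : ℚ × ℚ :=
  if h : ∃ mv : ℚ × ℚ, mv.1 + mv.2 = v ∧ compOK μ t false mv.1 ∧ compOK μ t true mv.2 then
    h.choose else (0, 0)

lemma extMove_spec (μ : Measure Cantor) [IsProbabilityMeasure μ] (t : List Bool) (v : ℚ)
    (hv : Vok μ t v) :
    (extMove μ t v).1 + (extMove μ t v).2 = v ∧ compOK μ t false (extMove μ t v).1 ∧
      compOK μ t true (extMove μ t v).2 := by
  have h := ext_exists μ t v hv
  unfold extMove
  rw [dif_pos h]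
  exact h.choose_spec

/-! ### Auxiliary: a winning strategy for II never selects the value zero -/

lemma selection_ne_zero {μ : Measure Cantor} [IsProbabilityMeasure μ] {s : ℝ} {A : Set Cantor}
    {τ : StratII} (hτ : ∀ rr : Run, ConsII τ rr → IIWinsRun μ s A rr)
    (r0 : Run) (n : ℕ)
    (h1 : ∀ k, k < n → IOK μ s r0 k)
    (h2 : ∀ k, k < n → (r0 k).2 = τ (hist r0 k) (r0 k).1)
    (m : ℚ × ℚ)
    (hm0 : compOK μ (path r0 n) false m.1) (hm1 : compOK μ (path r0 n) true m.2)
    (hs0 : n = 0 → s < (m.1 : ℝ) + (m.2 : ℝ))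
    (hsk : ∀ k, n = k + 1 → m.1 + m.2 = sel r0 k) :
    (if τ (hist r0 n) m then m.2 else m.1) ≠ 0 := by
  set F : List GRound → GRound := fun h =>
    if h.length < n then r0 h.length
    else if h.length = n then (m, τ h m)
    else ((extMove μ (pathL h) (lastSel h)), τ h (extMove μ (pathL h) (lastSel h))) with hF
  set r1 : Run := runOf F with hr1
  have hr1k : ∀ k, r1 k = F (hist r1 k) := by
    intro k; rw [hr1, hist_runOf]; rfl
  have hhisteq : ∀ k, k ≤ n → hist r1 k = hist r0 k := by
    intro k
    induction k with
    | zero => intro _; rfl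
    | succ j ih =>
      intro hj
      have hjn : j < n := Nat.lt_of_succ_le hj
      rw [hist_succ, hist_succ, ih (le_of_lt hjn), hr1k j, ih (le_of_lt hjn)]
      have : (hist r0 j).length = j := hist_length r0 j
      rw [hF]
      simp only [this, if_pos hjn]
  have hagree : ∀ k, k < n → r1 k = r0 k := by
    intro k hk
    rw [hr1k k, hhisteq k (le_of_lt hk), hF]
    simp only [hist_length, if_pos hk]
  have hr1n : r1 n = (m, τ (hist r0 n) m) := by
    rw [hr1k n, hhisteq n le_rfl, hF]
    simp [hist_length]
  have hpathn : path r1 n = path r0 n := path_congr n hagree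
  have hr1big : ∀ k, n < k →
      r1 k = ((extMove μ (path r1 k) (lastSel (hist r1 k))),
        τ (hist r1 k) (extMove μ (path r1 k) (lastSel (hist r1 k)))) := by
    intro k hk
    rw [hr1k k, hF]
    simp only [hist_length, pathL_hist]
    rw [if_neg (by omega), if_neg (by omega)]
  -- II plays τ along r1
  have hcons : ConsII τ r1 := by
    intro k
    rcases Nat.lt_trichotomy k n with hk | hk | hk
    · rw [hagree k hk, hhisteq k (le_of_lt hk)]
      exact h2 k hk
    · subst hk
      rw [hr1n, hhisteq k le_rfl]
    · rw [hr1big k hk]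
  -- the selected bit at round n
  set bb : Bool := τ (hist r0 n) m with hbb
  have hbitsn : bits r1 n = bb := by unfold bits; rw [hr1n]
  have hseln : sel r1 n = (if bb then m.2 else m.1) := by
    unfold sel valI
    rw [hbitsn, hr1n]
  -- Vok / IOK beyond n
  have hVok1 : Vok μ (path r1 (n + 1)) (sel r1 n) := by
    rw [path_succ, hpathn, hbitsn, hseln]
    cases bb
    · exact compOK_Vok hm0
    · exact compOK_Vok hm1
  have hbig : ∀ j, Vok μ (path r1 (n + j + 1)) (sel r1 (n + j)) ∧
      (0 < j → IOK μ s r1 (n + j)) := by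
    intro j
    induction j with
    | zero => exact ⟨hVok1, fun h => absurd h (lt_irrefl 0)⟩
    | succ i ih =>
      have hklt : n < n + i + 1 := by omega
      have hstep := hr1big (n + i + 1) hklt
      have hlast : lastSel (hist r1 (n + i + 1)) = sel r1 (n + i) := lastSel_hist_succ r1 (n + i)
      have hspec := extMove_spec μ (path r1 (n + i + 1)) (sel r1 (n + i)) ih.1
      rw [hlast] at hstep
      obtain ⟨hsum, hc0, hc1⟩ := hspec
      have hval : ∀ b, valI r1 (n + i + 1) b =
          (if b then (extMove μ (path r1 (n + i + 1)) (sel r1 (n + i))).2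
           else (extMove μ (path r1 (n + i + 1)) (sel r1 (n + i))).1) := by
        intro b; unfold valI; rw [hstep]
      have hmok : ∀ b, mOK μ r1 (n + i + 1) b := by
        intro b
        rw [mOK_iff_compOK, hval]
        cases b
        · exact hc0
        · exact hc1
      have hIOK : IOK μ s r1 (n + i + 1) := by
        rw [IOK_succ_iff]
        refine ⟨hmok false, hmok true, ?_⟩
        have h1' : (r1 (n + i + 1)).1.1 = (extMove μ (path r1 (n + i + 1)) (sel r1 (n + i))).1 := by
          rw [hstep]
        have h2' : (r1 (n + i + 1)).1.2 = (extMove μ (path r1 (n + i + 1)) (sel r1 (n + i))).2 := by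
          rw [hstep]
        rw [h1', h2', hsum]
      refine ⟨?_, fun _ => hIOK⟩
      · -- Vok at next level
        show Vok μ (path r1 ((n + i + 1) + 1)) (sel r1 (n + i + 1))
        have hsel : sel r1 (n + i + 1) = valI r1 (n+i+1) (bits r1 (n+i+1)) := rfl
        rw [path_succ, hsel, hval]
        cases hb : bits r1 (n + i + 1)
        · simpa using compOK_Vok hc0
        · simpa using compOK_Vok hc1
  have hIOKall : ∀ k, IOK μ s r1 k := by
    intro k
    rcases Nat.lt_trichotomy k n with hk | hk | hk
    · exact (IOK_congr k (fun mm hmm => hagree mm (lt_of_le_of_lt hmm hk))).2 (h1 k hk)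
    · subst hk
      cases k with
      | zero =>
        rw [IOK_zero_iff]
        have e1 : (r1 0).1.1 = m.1 := by rw [hr1n]
        have e2 : (r1 0).1.2 = m.2 := by rw [hr1n]
        rw [e1, e2, hpathn]
        exact ⟨hm0, hm1, hs0 rfl⟩
      | succ i =>
        rw [IOK_succ_iff]
        have e1 : (r1 (i+1)).1.1 = m.1 := by rw [hr1n]
        have e2 : (r1 (i+1)).1.2 = m.2 := by rw [hr1n]
        have hsel' : sel r1 i = sel r0 i := by
          unfold sel valI bits; rw [hagree i (Nat.lt_succ_self i)]
        rw [e1, e2, hpathn, hsel']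
        exact ⟨hm0, hm1, hsk i rfl⟩
    · obtain ⟨j, hj⟩ := Nat.exists_eq_add_of_lt hk
      rw [hj]
      exact (hbig (j + 1)).2 (Nat.succ_pos j)
  rcases hτ r1 hcons with ⟨nn, -, hnn⟩ | ⟨hall, -⟩
  · exact absurd (hIOKall nn) hnn
  · have := (hall n).2
    unfold IIOK at this
    rwa [hseln] at this

/-! ### Auxiliary: the combinatorial core (choosing a common bit) -/

/-- Legality of player I offering `x` on the `false` side (and `v - x` on the `true` side),
where the children have measures `M0`, `M1`. -/
def Leg (M0 M1 : ℝ) (v x : ℚ) : Prop :=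
  0 ≤ x ∧ x ≤ v ∧ ((x : ℝ) ≤ M0) ∧ (0 < M0 → (x : ℝ) < M0) ∧
    (((v - x : ℚ) : ℝ) ≤ M1) ∧ (0 < M1 → ((v - x : ℚ) : ℝ) < M1)

/-- The value selected if player II answers `b` to the offer `(x, v - x)`. -/
def selq (v x : ℚ) (b : Bool) : ℚ := if b then v - x else x

lemma Leg_flip {M0 M1 : ℝ} {v x : ℚ} (h : Leg M0 M1 v x) : Leg M1 M0 v (v - x) := by
  obtain ⟨h1, h2, h3, h4, h5, h6⟩ := h
  refine ⟨by linarith, by linarith, h5, h6, ?_, ?_⟩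
  · rw [show v - (v - x) = x by ring]; exact h3
  · rw [show v - (v - x) = x by ring]; exact h4

lemma Leg_between {M0 M1 : ℝ} {v x y z : ℚ} (hx : Leg M0 M1 v x) (hy : Leg M0 M1 v y)
    (hxz : x ≤ z) (hzy : z ≤ y) : Leg M0 M1 v z := by
  obtain ⟨hx1, hx2, hx3, hx4, hx5, hx6⟩ := hx
  obtain ⟨hy1, hy2, hy3, hy4, hy5, hy6⟩ := hy
  have hzy' : (z : ℝ) ≤ (y : ℝ) := by exact_mod_cast hzy
  have hxzr : (x : ℝ) ≤ (z : ℝ) := by exact_mod_cast hxz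
  have hxz' : ((v - z : ℚ) : ℝ) ≤ ((v - x : ℚ) : ℝ) := by push_cast; linarith
  exact ⟨le_trans hx1 hxz, le_trans hzy hy2, le_trans hzy' hy3,
    fun h => lt_of_le_of_lt hzy' (hy4 h), le_trans hxz' hx5, fun h => lt_of_le_of_lt hxz' (hx6 h)⟩

lemma bisect {M0 M1 : ℝ} {v γ : ℚ} (hγ : 0 < γ) (f : ℚ → Bool) :
    ∀ (n : ℕ) (a b : ℚ), Leg M0 M1 v a → Leg M0 M1 v b → f a = false → f b = true →
      a - b ≤ γ * 2 ^ n →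
      ∃ x0 x1 : ℚ, Leg M0 M1 v x0 ∧ Leg M0 M1 v x1 ∧ f x0 = false ∧ f x1 = true ∧
        x0 - x1 ≤ γ := by
  intro n
  induction n with
  | zero =>
    intro a b ha hb hfa hfb hab
    exact ⟨a, b, ha, hb, hfa, hfb, by simpa using hab⟩
  | succ k ih =>
    intro a b ha hb hfa hfb hab
    rcases le_or_gt (a - b) (γ * 2 ^ k) with h | h
    · exact ih a b ha hb hfa hfb h
    · have hba : b < a := by nlinarith [pow_pos (show (0:ℚ) < 2 by norm_num) k]
      set m : ℚ := (a + b) / 2 with hm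
      have hbm : b ≤ m := by rw [hm]; linarith
      have hma : m ≤ a := by rw [hm]; linarith
      have hlegm : Leg M0 M1 v m := Leg_between hb ha hbm hma
      cases hfm : f m
      · refine ih m b hlegm hb hfm hfb ?_
        rw [hm]; rw [pow_succ] at hab; linarith
      · refine ih a m ha hlegm hfa hfm ?_
        rw [hm]; rw [pow_succ] at hab; linarith

lemma keyStep_ref (M0 M1 : ℝ) (hM0 : 0 ≤ M0) (hM1 : 0 ≤ M1)
    (c0 c1 : ℚ) (hc0M : (c0 : ℝ) ≤ M0) (hc1M : (c1 : ℝ) ≤ M1)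
    (V : ℕ → ℚ) (hVpos : ∀ i, 0 < V i)
    (hVsum : Summable (fun i => ((V i : ℚ) : ℝ)))
    (hVv : ∑' i, ((V i : ℚ) : ℝ) < (c0 : ℝ) + (c1 : ℝ))
    (f : ℕ → ℚ → Bool)
    (hnz : ∀ i x, Leg M0 M1 (V i) x → 0 < selq (V i) x (f i x))
    (i0 : ℕ) (href : ∀ x, Leg M0 M1 (V i0) x → f i0 x = false) :
    ∃ X : ℕ → ℚ, (∀ i, Leg M0 M1 (V i) (X i)) ∧ (∀ i, f i (X i) = false) ∧
      Summable (fun i => ((X i : ℚ) : ℝ)) ∧ ∑' i, ((X i : ℚ) : ℝ) < (c0 : ℝ) := by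
  set σ : ℝ := ((c0 : ℝ) + (c1 : ℝ)) - ∑' i, ((V i : ℚ) : ℝ) with hσdef
  have hσ : 0 < σ := by rw [hσdef]; linarith
  have hVle : ∀ i, ((V i : ℚ) : ℝ) ≤ ∑' j, ((V j : ℚ) : ℝ) := fun i =>
    hVsum.le_tsum i (fun j _ => by exact_mod_cast (hVpos j).le)
  have hVlt : ∀ i, ((V i : ℚ) : ℝ) < M0 + M1 := fun i =>
    lt_of_le_of_lt (hVle i) (lt_of_lt_of_le hVv (by linarith))
  -- the refuser has all its value needed on the `false` side
  have hM1V : M1 ≤ (V i0 : ℝ) := by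
    by_contra hcon
    push_neg at hcon
    have hleg0 : Leg M0 M1 (V i0) 0 := by
      refine ⟨le_rfl, (hVpos i0).le, by exact_mod_cast hM0, fun h => by exact_mod_cast h, ?_, ?_⟩
      · simpa using hcon.le
      · intro _; simpa using hcon
    have := hnz i0 0 hleg0
    rw [href 0 hleg0] at this
    simp [selq] at this
  have hM0pos : 0 < M0 := by
    have := hVlt i0; linarith
  -- choose the cheap point for the refuser
  have hx0 : ∃ q : ℚ, Leg M0 M1 (V i0) q ∧ (q : ℝ) < (V i0 : ℝ) - M1 + σ / 2 := by
    rcases eq_or_lt_of_le hM1 with hM1z | hM1pos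
    · refine ⟨V i0, ⟨(hVpos i0).le, le_rfl, ?_, fun _ => ?_, by simp [← hM1z], fun h => ?_⟩, ?_⟩
      · have := hVlt i0; rw [← hM1z] at this; linarith
      · have := hVlt i0; rw [← hM1z] at this; linarith
      · rw [← hM1z] at h; exact absurd h (lt_irrefl 0)
      · linarith
    · have hint : (V i0 : ℝ) - M1 < min (min ((V i0 : ℝ)) M0) ((V i0 : ℝ) - M1 + σ / 2) := by
        refine lt_min (lt_min (by linarith) ?_) (by linarith)
        have := hVlt i0; linarith
      obtain ⟨q, hq1, hq2⟩ := exists_rat_btwn hint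
      have hq2a : (q : ℝ) < (V i0 : ℝ) := lt_of_lt_of_le hq2 ((min_le_left _ _).trans (min_le_left _ _))
      have hq2b : (q : ℝ) < M0 := lt_of_lt_of_le hq2 ((min_le_left _ _).trans (min_le_right _ _))
      have hq2c : (q : ℝ) < (V i0 : ℝ) - M1 + σ / 2 := lt_of_lt_of_le hq2 (min_le_right _ _)
      have hq0 : 0 ≤ q := by
        have : (0 : ℝ) ≤ (q : ℝ) := le_of_lt (lt_of_le_of_lt (by linarith) hq1)
        exact_mod_cast this
      refine ⟨q, ⟨hq0, by exact_mod_cast hq2a.le, hq2b.le, fun _ => hq2b, ?_, fun _ => ?_⟩, hq2c⟩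
      · push_cast; linarith
      · push_cast; linarith
  obtain ⟨q, hqleg, hqbnd⟩ := hx0
  -- every game has a legal `false`-point
  have hfp : ∀ i, ∃ x, Leg M0 M1 (V i) x ∧ f i x = false := by
    intro i
    by_contra hcon
    push_neg at hcon
    have hall : ∀ x, Leg M0 M1 (V i) x → f i x = true := by
      intro x hx
      rcases Bool.dichotomy (f i x) with h | h
      · exact absurd h (hcon x hx)
      · exact h
    -- then all of `V i`'s value is needed on the `true` side
    have hM0V : M0 ≤ (V i : ℝ) := by
      by_contra hcon2
      push_neg at hcon2
      have hlegv : Leg M0 M1 (V i) (V i) := by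
        refine ⟨(hVpos i).le, le_rfl, hcon2.le, fun _ => hcon2, by simpa using hM1, fun h => by simpa using h⟩
      have := hnz i (V i) hlegv
      rw [hall (V i) hlegv] at this
      simp [selq] at this
    rcases eq_or_ne i i0 with rfl | hne
    · have h1 := href q hqleg
      have h2 := hall q hqleg
      rw [h1] at h2; exact Bool.false_ne_true h2
    · have hsum2 : ((V i : ℚ) : ℝ) + ((V i0 : ℚ) : ℝ) ≤ ∑' j, ((V j : ℚ) : ℝ) := by
        have := Summable.sum_le_tsum ({i, i0} : Finset ℕ)
          (fun j _ => by exact_mod_cast (hVpos j).le) hVsum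
        rwa [Finset.sum_pair hne] at this
      linarith
  -- assemble the choices
  set X : ℕ → ℚ := fun i => if i = i0 then q else (hfp i).choose with hX
  have hXleg : ∀ i, Leg M0 M1 (V i) (X i) := by
    intro i
    rw [hX]
    rcases eq_or_ne i i0 with rfl | hne
    · simpa using hqleg
    · simpa [hne] using (hfp i).choose_spec.1
  have hXf : ∀ i, f i (X i) = false := by
    intro i
    rw [hX]
    rcases eq_or_ne i i0 with rfl | hne
    · simpa using href q hqleg
    · simpa [hne] using (hfp i).choose_spec.2
  have hXle : ∀ i, ((X i : ℚ) : ℝ) ≤ ((V i : ℚ) : ℝ) := fun i => by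
    exact_mod_cast (hXleg i).2.1
  have hX0 : ∀ i, (0 : ℝ) ≤ ((X i : ℚ) : ℝ) := fun i => by exact_mod_cast (hXleg i).1
  have hXsum : Summable (fun i => ((X i : ℚ) : ℝ)) :=
    Summable.of_nonneg_of_le hX0 hXle hVsum
  refine ⟨X, hXleg, hXf, hXsum, ?_⟩
  -- the sum bound
  have hsplitX : ∑' i, ((X i : ℚ) : ℝ) = ((X i0 : ℚ) : ℝ) + ∑' i, (if i = i0 then 0 else ((X i : ℚ) : ℝ)) :=
    Summable.tsum_eq_add_tsum_ite hXsum i0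
  have hsplitV : ∑' i, ((V i : ℚ) : ℝ) = ((V i0 : ℚ) : ℝ) + ∑' i, (if i = i0 then 0 else ((V i : ℚ) : ℝ)) :=
    Summable.tsum_eq_add_tsum_ite hVsum i0
  have hVnn : ∀ i, (0 : ℝ) ≤ ((V i : ℚ) : ℝ) := fun i => by exact_mod_cast (hVpos i).le
  have hsumXite : Summable (fun i => (if i = i0 then 0 else ((X i : ℚ) : ℝ))) := by
    refine Summable.of_nonneg_of_le (fun i => ?_) (fun i => ?_) hXsum
    · by_cases h : i = i0 <;> simp [h, hX0 i, (hXleg i0).1]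
    · by_cases h : i = i0 <;> simp [h, hX0 i, (hXleg i0).1]
  have hsumVite : Summable (fun i => (if i = i0 then 0 else ((V i : ℚ) : ℝ))) := by
    refine Summable.of_nonneg_of_le (fun i => ?_) (fun i => ?_) hVsum
    · by_cases h : i = i0 <;> simp [h, hVnn i, (hVpos i0).le]
    · by_cases h : i = i0 <;> simp [h, hVnn i, (hVpos i0).le]
  have hmono : ∑' i, (if i = i0 then 0 else ((X i : ℚ) : ℝ)) ≤
      ∑' i, (if i = i0 then 0 else ((V i : ℚ) : ℝ)) := by
    refine Summable.tsum_le_tsum (fun i => ?_) hsumXite hsumVite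
    by_cases h : i = i0 <;> simp [h, hXle i]
  have hXi0 : ((X i0 : ℚ) : ℝ) < (V i0 : ℝ) - M1 + σ / 2 := by
    rw [hX]; simpa using hqbnd
  rw [hsplitX]
  have : ∑' i, (if i = i0 then 0 else ((V i : ℚ) : ℝ)) = ∑' i, ((V i : ℚ) : ℝ) - (V i0 : ℝ) := by
    rw [hsplitV]; push_cast; ring
  rw [hσdef] at hσ
  calc ((X i0 : ℚ) : ℝ) + ∑' i, (if i = i0 then 0 else ((X i : ℚ) : ℝ))
      ≤ ((X i0 : ℚ) : ℝ) + ∑' i, (if i = i0 then 0 else ((V i : ℚ) : ℝ)) := by linarith [hmono]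
    _ = ((X i0 : ℚ) : ℝ) + (∑' i, ((V i : ℚ) : ℝ) - (V i0 : ℝ)) := by rw [this]
    _ < ((V i0 : ℝ) - M1 + σ / 2) + (∑' i, ((V i : ℚ) : ℝ) - (V i0 : ℝ)) := by linarith [hXi0]
    _ = ∑' i, ((V i : ℚ) : ℝ) - M1 + σ / 2 := by ring
    _ < (c0 : ℝ) := by rw [hσdef]; linarith

lemma keyStep (M0 M1 : ℝ) (hM0 : 0 ≤ M0) (hM1 : 0 ≤ M1)
    (c0 c1 : ℚ) (hc0M : (c0 : ℝ) ≤ M0) (hc1M : (c1 : ℝ) ≤ M1)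
    (V : ℕ → ℚ) (hVpos : ∀ i, 0 < V i)
    (hVsum : Summable (fun i => ((V i : ℚ) : ℝ)))
    (hVv : ∑' i, ((V i : ℚ) : ℝ) < (c0 : ℝ) + (c1 : ℝ))
    (f : ℕ → ℚ → Bool)
    (hnz : ∀ i x, Leg M0 M1 (V i) x → 0 < selq (V i) x (f i x)) :
    ∃ (b : Bool) (X : ℕ → ℚ),
      (∀ i, Leg M0 M1 (V i) (X i)) ∧ (∀ i, f i (X i) = b) ∧
      Summable (fun i => ((selq (V i) (X i) b : ℚ) : ℝ)) ∧
      ∑' i, ((selq (V i) (X i) b : ℚ) : ℝ) < ((if b then c1 else c0 : ℚ) : ℝ) := by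
  by_cases hR0 : ∃ i, ∀ x, Leg M0 M1 (V i) x → f i x = false
  · obtain ⟨i0, href⟩ := hR0
    obtain ⟨X, h1, h2, h3, h4⟩ :=
      keyStep_ref M0 M1 hM0 hM1 c0 c1 hc0M hc1M V hVpos hVsum hVv f hnz i0 href
    refine ⟨false, X, h1, h2, ?_, ?_⟩
    · simpa [selq] using h3
    · simpa [selq] using h4
  by_cases hR1 : ∃ i, ∀ x, Leg M0 M1 (V i) x → f i x = true
  · obtain ⟨i0, href⟩ := hR1
    -- flip the sides and use the refuser lemma
    set g : ℕ → ℚ → Bool := fun i x => !(f i (V i - x)) with hg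
    have hnz' : ∀ i x, Leg M1 M0 (V i) x → 0 < selq (V i) x (g i x) := by
      intro i x hx
      have hx' : Leg M0 M1 (V i) (V i - x) := Leg_flip hx
      have h := hnz i (V i - x) hx'
      show 0 < selq (V i) x (!(f i (V i - x)))
      cases hfv : f i (V i - x)
      · rw [hfv] at h
        simp [selq] at h ⊢
        exact h
      · rw [hfv] at h
        simp [selq] at h ⊢
        exact h
    have href' : ∀ x, Leg M1 M0 (V i0) x → g i0 x = false := by
      intro x hx
      have hx' : Leg M0 M1 (V i0) (V i0 - x) := Leg_flip hx
      show (!(f i0 (V i0 - x))) = false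
      simp [href (V i0 - x) hx']
    obtain ⟨X, h1, h2, h3, h4⟩ :=
      keyStep_ref M1 M0 hM1 hM0 c1 c0 hc1M hc0M V hVpos hVsum (by linarith) g hnz' i0 href'
    refine ⟨true, fun i => V i - X i, ?_, ?_, ?_, ?_⟩
    · intro i
      have := Leg_flip (h1 i)
      exact this
    · intro i
      have := h2 i
      rw [hg] at this
      simp only [Bool.not_eq_false'] at this
      exact this
    · have : (fun i => ((selq (V i) (V i - X i) true : ℚ) : ℝ)) = fun i => ((X i : ℚ) : ℝ) := by
        funext i; simp [selq]
      rw [this]; exact h3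
    · have : (fun i => ((selq (V i) (V i - X i) true : ℚ) : ℝ)) = fun i => ((X i : ℚ) : ℝ) := by
        funext i; simp [selq]
      rw [tsum_congr (fun i => by rw [congrFun this i])]
      simpa using h4
  · -- no refusers: both options available in every game
    push_neg at hR0 hR1
    have hboth : ∀ i, (∃ x, Leg M0 M1 (V i) x ∧ f i x = true) ∧
        (∃ x, Leg M0 M1 (V i) x ∧ f i x = false) := by
      intro i
      constructor
      · obtain ⟨x, hx, hfx⟩ := hR0 i
        exact ⟨x, hx, by simpa using hfx⟩
      · obtain ⟨x, hx, hfx⟩ := hR1 i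
        exact ⟨x, hx, by simpa using hfx⟩
    set σ : ℝ := ((c0 : ℝ) + (c1 : ℝ)) - ∑' i, ((V i : ℚ) : ℝ) with hσdef
    have hσ : 0 < σ := by rw [hσdef]; linarith
    obtain ⟨γ, hγ1, hγ2⟩ := exists_rat_btwn (show (0 : ℝ) < σ / 4 by linarith)
    have hγpos : 0 < γ := by exact_mod_cast hγ1
    -- bisection in every game
    have hpair : ∀ i, ∃ x0 x1 : ℚ, Leg M0 M1 (V i) x0 ∧ Leg M0 M1 (V i) x1 ∧
        f i x0 = false ∧ f i x1 = true ∧ x0 - x1 ≤ γ * (1/2) ^ i := by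
      intro i
      obtain ⟨⟨xt, hxt, hfxt⟩, ⟨xf, hxf, hfxf⟩⟩ := hboth i
      have hγi : 0 < γ * (1/2 : ℚ) ^ i := by positivity
      obtain ⟨n, hn⟩ := pow_unbounded_of_one_lt ((xf - xt) / (γ * (1/2) ^ i)) (show (1:ℚ) < 2 by norm_num)
      have hstart : xf - xt ≤ (γ * (1/2) ^ i) * 2 ^ n := by
        rw [div_lt_iff₀ hγi] at hn
        linarith [hn]
      exact bisect hγi (f i) n xf xt hxf hxt hfxf hfxt hstart
    choose x0 x1 hleg0 hleg1 hf0 hf1 hgap using hpair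
    -- the two candidate sums
    have h0nn : ∀ i, (0 : ℝ) ≤ ((x0 i : ℚ) : ℝ) := fun i => by exact_mod_cast (hleg0 i).1
    have h0le : ∀ i, ((x0 i : ℚ) : ℝ) ≤ ((V i : ℚ) : ℝ) := fun i => by exact_mod_cast (hleg0 i).2.1
    have h1nn : ∀ i, (0 : ℝ) ≤ (((V i - x1 i : ℚ)) : ℝ) := fun i => by
      have := (hleg1 i).2.1; push_cast; linarith [(show ((x1 i : ℚ) : ℝ) ≤ ((V i : ℚ) : ℝ) from by exact_mod_cast this)]
    have h1le : ∀ i, (((V i - x1 i : ℚ)) : ℝ) ≤ ((V i : ℚ) : ℝ) := fun i => by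
      have := (hleg1 i).1; push_cast
      have : (0 : ℝ) ≤ ((x1 i : ℚ) : ℝ) := by exact_mod_cast this
      linarith
    have hsum0 : Summable (fun i => ((x0 i : ℚ) : ℝ)) :=
      Summable.of_nonneg_of_le h0nn h0le hVsum
    have hsum1 : Summable (fun i => (((V i - x1 i : ℚ)) : ℝ)) :=
      Summable.of_nonneg_of_le h1nn h1le hVsum
    have hgeo : Summable (fun i : ℕ => (γ : ℝ) * (1/2) ^ i) :=
      (summable_geometric_two).mul_left _
    have htot : ∑' i, ((x0 i : ℚ) : ℝ) + ∑' i, (((V i - x1 i : ℚ)) : ℝ) <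
        (c0 : ℝ) + (c1 : ℝ) := by
      have hptw : ∀ i, ((x0 i : ℚ) : ℝ) + (((V i - x1 i : ℚ)) : ℝ) ≤
          ((V i : ℚ) : ℝ) + (γ : ℝ) * (1/2) ^ i := by
        intro i
        have := hgap i
        have hcast0 : ((x0 i : ℚ) : ℝ) - ((x1 i : ℚ) : ℝ) ≤ (((γ * (1/2) ^ i : ℚ)) : ℝ) := by
          exact_mod_cast this
        have hcast : ((x0 i : ℚ) : ℝ) - ((x1 i : ℚ) : ℝ) ≤ (γ : ℝ) * (1/2) ^ i := by
          rw [show (((γ * (1/2) ^ i : ℚ)) : ℝ) = (γ : ℝ) * (1/2) ^ i by push_cast; ring] at hcast0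
          exact hcast0
        push_cast
        linarith
      have hsum_le : ∑' i, (((x0 i : ℚ) : ℝ) + (((V i - x1 i : ℚ)) : ℝ)) ≤
          ∑' i, (((V i : ℚ) : ℝ) + (γ : ℝ) * (1/2) ^ i) :=
        Summable.tsum_le_tsum hptw (hsum0.add hsum1) (hVsum.add hgeo)
      rw [Summable.tsum_add hsum0 hsum1] at hsum_le
      rw [Summable.tsum_add hVsum hgeo, tsum_mul_left, tsum_geometric_two] at hsum_le
      have : (γ : ℝ) * 2 < σ / 2 := by linarith
      rw [hσdef] at this
      linarith
    rcases lt_or_ge (∑' i, ((x0 i : ℚ) : ℝ)) (c0 : ℝ) with hlt | hge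
    · refine ⟨false, x0, hleg0, hf0, ?_, ?_⟩
      · simpa [selq] using hsum0
      · simpa [selq] using hlt
    · refine ⟨true, x1, hleg1, hf1, ?_, ?_⟩
      · simpa [selq] using hsum1
      · have : ∑' i, (((V i - x1 i : ℚ)) : ℝ) < (c1 : ℝ) := by linarith
        simpa [selq] using this

/-! ### Auxiliary: player II's combined strategy -/

lemma Leg_compOK {μ : Measure Cantor} {t : List Bool} {v x : ℚ}
    (h : Leg (Mre μ (t ++ [false])) (Mre μ (t ++ [true])) v x) :
    compOK μ t false x ∧ compOK μ t true (v - x) := by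
  obtain ⟨h1, h2, h3, h4, h5, h6⟩ := h
  exact ⟨⟨h1, h3, h4⟩, ⟨sub_nonneg.2 h2, h5, h6⟩⟩

lemma round0V (e : ℕ → ℝ) (he0 : ∀ i, 0 ≤ e i) (hesum : Summable e)
    (v : ℝ) (hv : ∑' i, e i < v) :
    ∃ w : ℕ → ℚ, (∀ i, e i < ((w i : ℚ) : ℝ)) ∧ (∀ i, 0 < w i) ∧
      Summable (fun i => ((w i : ℚ) : ℝ)) ∧ ∑' i, ((w i : ℚ) : ℝ) < v := by
  set δ : ℝ := (v - ∑' i, e i) / 2 with hδdef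
  have hδ : 0 < δ := by
    rw [hδdef]; linarith
  have hchoice : ∀ i : ℕ, ∃ w : ℚ, e i < (w : ℝ) ∧ (w : ℝ) < e i + (δ / 2) * (1/2) ^ i := by
    intro i
    obtain ⟨q, hq1, hq2⟩ := exists_rat_btwn (show e i < e i + (δ / 2) * (1/2) ^ i by
      have : (0 : ℝ) < (δ / 2) * (1/2) ^ i := by positivity
      linarith)
    exact ⟨q, hq1, hq2⟩
  choose w hw1 hw2 using hchoice
  have hwpos : ∀ i, 0 < w i := fun i => by
    have : (0 : ℝ) < (w i : ℝ) := lt_of_le_of_lt (he0 i) (hw1 i)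
    exact_mod_cast this
  have hgeo : Summable (fun i : ℕ => (δ / 2) * (1/2 : ℝ) ^ i) :=
    summable_geometric_two.mul_left _
  have hbnd : Summable (fun i => e i + (δ / 2) * (1/2 : ℝ) ^ i) := hesum.add hgeo
  have hwsum : Summable (fun i => ((w i : ℚ) : ℝ)) :=
    Summable.of_nonneg_of_le (fun i => le_of_lt (lt_of_le_of_lt (he0 i) (hw1 i)))
      (fun i => (hw2 i).le) hbnd
  refine ⟨w, hw1, hwpos, hwsum, ?_⟩
  have h1 : ∑' i, ((w i : ℚ) : ℝ) ≤ ∑' i, (e i + (δ / 2) * (1/2) ^ i) :=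
    Summable.tsum_le_tsum (fun i => (hw2 i).le) hwsum hbnd
  rw [Summable.tsum_add hesum hgeo, tsum_mul_left, tsum_geometric_two] at h1
  rw [hδdef] at h1
  linarith

/-- The key property of one step of the combined strategy. -/
def PP (μ : Measure Cantor) (e : ℕ → ℝ) (T : ℕ → StratII)
    (s : ℕ → List GRound) (pl : List Bool) (c : ℚ × ℚ)
    (out : Bool × (ℕ → List GRound)) : Prop :=
  ∃ V X : ℕ → ℚ,
    (∀ i, s i = [] → e i < ((V i : ℚ) : ℝ)) ∧
    (∀ i, s i ≠ [] → V i = lastSel (s i)) ∧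
    (∀ i, out.2 i = s i ++ [((X i, V i - X i), out.1)]) ∧
    (∀ i, Leg (Mre μ (pl ++ [false])) (Mre μ (pl ++ [true])) (V i) (X i)) ∧
    (∀ i, T i (s i) (X i, V i - X i) = out.1) ∧
    (∀ i, 0 < selq (V i) (X i) out.1) ∧
    Summable (fun i => ((selq (V i) (X i) out.1 : ℚ) : ℝ)) ∧
    ∑' i, ((selq (V i) (X i) out.1 : ℚ) : ℝ) < ((if out.1 then c.2 else c.1 : ℚ) : ℝ)

open Classical in
noncomputable def upd (μ : Measure Cantor) (e : ℕ → ℝ) (T : ℕ → StratII)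
    (s : ℕ → List GRound) (pl : List Bool) (c : ℚ × ℚ) : Bool × (ℕ → List GRound) :=
  if h : ∃ out, PP μ e T s pl c out then h.choose else (true, s)

lemma upd_spec {μ : Measure Cantor} {e : ℕ → ℝ} {T : ℕ → StratII}
    {s : ℕ → List GRound} {pl : List Bool} {c : ℚ × ℚ}
    (h : ∃ out, PP μ e T s pl c out) : PP μ e T s pl c (upd μ e T s pl c) := by
  unfold upd
  rw [dif_pos h]
  exact h.choose_spec

/-- Reconstructing the simulated state from the (reversed) history. -/
noncomputable def stR (μ : Measure Cantor) (e : ℕ → ℝ) (T : ℕ → StratII) :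
    List GRound → List Bool × (ℕ → List GRound)
  | [] => ([], fun _ => [])
  | g :: hR =>
    ((stR μ e T hR).1 ++ [g.2], (upd μ e T (stR μ e T hR).2 (stR μ e T hR).1 g.1).2)

/-- Player II's combined strategy. -/
noncomputable def myStrat (μ : Measure Cantor) (e : ℕ → ℝ) (T : ℕ → StratII) : StratII :=
  fun h c => (upd μ e T (stR μ e T h.reverse).2 (stR μ e T h.reverse).1 c).1

/-- Countable additivity for the measure game: if `∑ εₙ = ε < 1` with `εₙ ≥ 0` and player II
wins each `G(εₙ, Aₙ)`, then player II wins `G(ε, ⋂ₙ Aₙ)`. -/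
theorem winsII_iInter (μ : Measure Cantor) [IsProbabilityMeasure μ]
    (ε : ℕ → ℝ) (A : ℕ → Set Cantor) (hε0 : ∀ n, 0 ≤ ε n)
    (hsum : Summable ε) (hε1 : ∑' n, ε n < 1)
    (hwin : ∀ n, WinsII μ (ε n) (A n)) :
    WinsII μ (∑' n, ε n) (⋂ n, A n) := by
  classical
  set T : ℕ → StratII := fun i => (hwin i).choose with hTdef
  have hTw : ∀ i, ∀ rr : Run, ConsII (T i) rr → IIWinsRun μ (ε i) (A i) rr :=
    fun i => (hwin i).choose_spec
  set sv : ℝ := ∑' n, ε n with hsv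
  refine ⟨myStrat μ ε T, ?_⟩
  intro r hcons
  set S : ℕ → ℕ → List GRound := fun n => (stR μ ε T (hist r n).reverse).2 with hS
  have hrev : ∀ n, (hist r (n + 1)).reverse = r n :: (hist r n).reverse := by
    intro n; rw [hist_succ]; simp
  have hPL : ∀ n, (stR μ ε T (hist r n).reverse).1 = path r n := by
    intro n
    induction n with
    | zero => rfl
    | succ k ih =>
      rw [hrev k]
      show (stR μ ε T ((hist r k).reverse)).1 ++ [(r k).2] = path r (k + 1)
      rw [ih, path_succ]
      rfl
  have hSsucc : ∀ n, S (n + 1) = (upd μ ε T (S n) (path r n) ((r n).1)).2 := by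
    intro n
    show (stR μ ε T (hist r (n + 1)).reverse).2 = _
    rw [hrev n]
    show (upd μ ε T (stR μ ε T (hist r n).reverse).2 (stR μ ε T (hist r n).reverse).1 ((r n).1)).2 = _
    rw [hPL n]
  have hS0 : ∀ i, S 0 i = [] := fun i => rfl
  set Up : ℕ → Bool × (ℕ → List GRound) := fun n => upd μ ε T (S n) (path r n) ((r n).1) with hUp
  have hbit : ∀ n, bits r n = (Up n).1 := by
    intro n
    have h := hcons n
    unfold myStrat at h
    rw [hPL n] at h
    exact h
  set Q : ℕ → Prop := fun n => PP μ ε T (S n) (path r n) ((r n).1) (Up n) with hQdef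
  set ri : ℕ → Run := fun i k => (S (k + 1) i).getLastD ((0, 0), true) with hri
  -- the simulated runs are consistent, legal partial plays
  have hinv : ∀ n, (∀ k, k < n → Q k) → ∀ i,
      hist (ri i) n = S n i ∧
      (∀ k, k < n → bits (ri i) k = bits r k) ∧
      (∀ k, k < n → (ri i k).2 = T i (hist (ri i) k) (ri i k).1) ∧
      (∀ k, k < n → IOK μ (ε i) (ri i) k) := by
    intro n
    induction n with
    | zero =>
      intro _ i
      exact ⟨rfl, fun k hk => absurd hk (Nat.not_lt_zero k),
        fun k hk => absurd hk (Nat.not_lt_zero k), fun k hk => absurd hk (Nat.not_lt_zero k)⟩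
    | succ m ih =>
      intro hQle i
      obtain ⟨hhist, hbits, hconsk, hiok⟩ := ih (fun k hk => hQle k (hk.trans (Nat.lt_succ_self m))) i
      obtain ⟨V, X, p1, p2, p3, p4, p5, p6, p7, p8⟩ := hQle m (Nat.lt_succ_self m)
      have hSm : S (m + 1) i = S m i ++ [((X i, V i - X i), (Up m).1)] := by
        rw [hSsucc m]; exact p3 i
      have hrim : ri i m = ((X i, V i - X i), (Up m).1) := by
        show (S (m + 1) i).getLastD ((0, 0), true) = _
        rw [hSm]
        exact List.getLastD_concat
      have hhist' : hist (ri i) (m + 1) = S (m + 1) i := by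
        rw [hist_succ, hhist, hrim, hSm]
      have hbits' : ∀ k, k < m + 1 → bits (ri i) k = bits r k := by
        intro k hk
        rcases Nat.lt_succ_iff_lt_or_eq.1 hk with hk' | heq
        · exact hbits k hk'
        · rw [heq]
          show (ri i m).2 = bits r m
          rw [hrim, hbit m]
      have hpathm : path (ri i) m = path r m := by
        unfold path
        apply List.map_congr_left
        intro k hk
        exact hbits k (List.mem_range.1 hk)
      refine ⟨hhist', hbits', ?_, ?_⟩
      · intro k hk
        rcases Nat.lt_succ_iff_lt_or_eq.1 hk with hk' | heq
        · exact hconsk k hk'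
        · rw [heq]
          show (ri i m).2 = T i (hist (ri i) m) (ri i m).1
          rw [hrim, hhist]
          show (Up m).1 = T i (S m i) (X i, V i - X i)
          exact (p5 i).symm
      · intro k hk
        rcases Nat.lt_succ_iff_lt_or_eq.1 hk with hk' | heq
        · exact hiok k hk'
        · rw [heq]
          -- IOK for the simulated game at round m
          have hcomp := Leg_compOK (p4 i)
          have hm0 : mOK μ (ri i) m false := by
            rw [mOK_iff_compOK]
            have : valI (ri i) m false = X i := by unfold valI; rw [hrim]; rfl
            rw [this, hpathm]
            exact hcomp.1
          have hm1 : mOK μ (ri i) m true := by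
            rw [mOK_iff_compOK]
            have : valI (ri i) m true = V i - X i := by unfold valI; rw [hrim]; rfl
            rw [this, hpathm]
            exact hcomp.2
          cases m with
          | zero =>
            refine ⟨hm0, hm1, ?_⟩
            have h1 : (ri i 0).1.1 = X i := by rw [hrim]
            have h2 : (ri i 0).1.2 = V i - X i := by rw [hrim]
            rw [h1, h2]
            have hε : ε i < ((V i : ℚ) : ℝ) := p1 i (hS0 i)
            have : ((X i : ℚ) : ℝ) + ((V i - X i : ℚ) : ℝ) = ((V i : ℚ) : ℝ) := by
              push_cast; ring
            rw [this]
            exact hε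
          | succ j =>
            refine ⟨hm0, hm1, ?_⟩
            have h1 : (ri i (j + 1)).1.1 = X i := by rw [hrim]
            have h2 : (ri i (j + 1)).1.2 = V i - X i := by rw [hrim]
            rw [h1, h2]
            have hne : S (j + 1) i ≠ [] := by
              obtain ⟨V', X', q1, q2, q3, q4, q5, q6, q7, q8⟩ :=
                hQle j ((Nat.lt_succ_self j).trans (Nat.lt_succ_self (j + 1)))
              rw [hSsucc j, q3 i]
              exact List.append_ne_nil_of_right_ne_nil _ (by simp)
            have hV : V i = lastSel (S (j + 1) i) := p2 i hne
            have hlast : lastSel (S (j + 1) i) = sel (ri i) j := by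
              rw [← hhist, lastSel_hist_succ]
            rw [← hlast, ← hV]
            ring
  -- one step of the strategy succeeds, given that the real player I has been legal
  have hQstep : ∀ n, (∀ m, m ≤ n → IOK μ sv r m) → (∀ k, k < n → Q k) → Q n := by
    intro n hleg hQ
    have hIOKn := hleg n le_rfl
    have hcomp : compOK μ (path r n) false ((r n).1.1) ∧ compOK μ (path r n) true ((r n).1.2) := by
      cases n with
      | zero => exact ⟨hIOKn.1, hIOKn.2.1⟩
      | succ j => exact ⟨hIOKn.1, hIOKn.2.1⟩
    have hsum0 : n = 0 → sv < ((r n).1.1 : ℝ) + ((r n).1.2 : ℝ) := by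
      intro h0; subst h0; exact hIOKn.2.2
    have hsumk : ∀ j, n = j + 1 → (r n).1.1 + (r n).1.2 = sel r j := by
      intro j hj; subst hj; exact hIOKn.2.2
    have hselj : ∀ j, sel r j = (if (Up j).1 then (r j).1.2 else (r j).1.1) := by
      intro j; unfold sel valI; rw [hbit j]
    have hVex : ∃ V : ℕ → ℚ,
        (∀ i, S n i = [] → ε i < ((V i : ℚ) : ℝ)) ∧
        (∀ i, S n i ≠ [] → V i = lastSel (S n i)) ∧
        (∀ i, 0 < V i) ∧
        Summable (fun i => ((V i : ℚ) : ℝ)) ∧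
        ∑' i, ((V i : ℚ) : ℝ) < ((r n).1.1 : ℝ) + ((r n).1.2 : ℝ) := by
      cases n with
      | zero =>
        obtain ⟨w, hw1, hw2, hw3, hw4⟩ := round0V ε hε0 hsum _ (by rw [← hsv]; exact hsum0 rfl)
        exact ⟨w, fun i _ => hw1 i, fun i h => absurd (hS0 i) h, hw2, hw3, hw4⟩
      | succ j =>
        obtain ⟨V', X', q1, q2, q3, q4, q5, q6, q7, q8⟩ := hQ j (Nat.lt_succ_self j)
        have hSne : ∀ i, S (j + 1) i ≠ [] := by
          intro i
          rw [hSsucc j, q3 i]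
          exact List.append_ne_nil_of_right_ne_nil _ (by simp)
        have hlasteq : ∀ i, lastSel (S (j + 1) i) = selq (V' i) (X' i) (Up j).1 := by
          intro i
          rw [hSsucc j, q3 i, lastSel_concat]
          rfl
        have heqfun : (fun i => ((lastSel (S (j + 1) i) : ℚ) : ℝ)) =
            fun i => ((selq (V' i) (X' i) (Up j).1 : ℚ) : ℝ) :=
          funext (fun i => by rw [hlasteq i])
        refine ⟨fun i => lastSel (S (j + 1) i), fun i h => absurd h (hSne i), fun i _ => rfl,
          ?_, ?_, ?_⟩
        · intro i
          show 0 < lastSel (S (j + 1) i)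
          rw [hlasteq i]; exact q6 i
        · rw [heqfun]; exact q7
        · rw [heqfun]
          have hcast : ((r (j + 1)).1.1 : ℝ) + ((r (j + 1)).1.2 : ℝ) = ((sel r j : ℚ) : ℝ) := by
            rw [← hsumk j rfl]; push_cast; ring
          rw [hcast, hselj j]
          exact q8
    obtain ⟨V, hV1, hV2, hVpos, hVsum, hVv⟩ := hVex
    have hs0' : n = 0 → ∀ i, ε i < ((V i : ℚ) : ℝ) := by
      intro h0 i; subst h0; exact hV1 i (hS0 i)
    have hskV : ∀ j, n = j + 1 → ∀ i, V i = sel (ri i) j := by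
      intro j hj i
      subst hj
      obtain ⟨V', X', q1, q2, q3, q4, q5, q6, q7, q8⟩ := hQ j (Nat.lt_succ_self j)
      have hne : S (j + 1) i ≠ [] := by
        rw [hSsucc j, q3 i]
        exact List.append_ne_nil_of_right_ne_nil _ (by simp)
      have h2 : lastSel (S (j + 1) i) = sel (ri i) j := by
        rw [← (hinv (j + 1) hQ i).1, lastSel_hist_succ]
      rw [hV2 i hne, h2]
    have hi := hinv n hQ
    have hpathri : ∀ i, path (ri i) n = path r n := by
      intro i
      unfold path
      apply List.map_congr_left
      intro k hk
      exact (hi i).2.1 k (List.mem_range.1 hk)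
    set f : ℕ → ℚ → Bool := fun i x => T i (S n i) (x, V i - x) with hf
    have hnz : ∀ i x, Leg (Mre μ (path r n ++ [false])) (Mre μ (path r n ++ [true])) (V i) x →
        0 < selq (V i) x (f i x) := by
      intro i x hx
      have hcompx := Leg_compOK hx
      have hne := selection_ne_zero (hTw i) (ri i) n (hi i).2.2.2 (hi i).2.2.1 (x, V i - x)
        (by rw [hpathri i]; exact hcompx.1) (by rw [hpathri i]; exact hcompx.2)
        (by intro h0
            have hεx := hs0' h0 i
            show ε i < ((x : ℚ) : ℝ) + ((V i - x : ℚ) : ℝ)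
            have hc : ((x : ℚ) : ℝ) + ((V i - x : ℚ) : ℝ) = ((V i : ℚ) : ℝ) := by
              push_cast; ring
            rw [hc]; exact hεx)
        (by intro j hj
            show x + (V i - x) = sel (ri i) j
            rw [← hskV j hj i]; ring)
      rw [(hi i).1] at hne
      have hsel_eq : selq (V i) x (f i x) = (if T i (S n i) (x, V i - x) then V i - x else x) := rfl
      have hge : 0 ≤ selq (V i) x (f i x) := by
        unfold selq
        split
        · have := hx.2.1
          linarith
        · exact hx.1
      rcases lt_or_eq_of_le hge with h | h
      · exact h
      · exfalso
        apply hne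
        rw [← hsel_eq]
        exact h.symm
    obtain ⟨b, X, hXleg, hXf, hXsum, hXbnd⟩ := keyStep
      (Mre μ (path r n ++ [false])) (Mre μ (path r n ++ [true])) (Mre_nonneg μ _) (Mre_nonneg μ _)
      ((r n).1.1) ((r n).1.2) hcomp.1.2.1 hcomp.2.2.1 V hVpos hVsum hVv f hnz
    have hPPex : ∃ out, PP μ ε T (S n) (path r n) ((r n).1) out := by
      refine ⟨(b, fun i => S n i ++ [((X i, V i - X i), b)]), V, X, hV1, hV2, fun i => rfl,
        hXleg, hXf, ?_, hXsum, hXbnd⟩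
      intro i
      have := hnz i (X i) (hXleg i)
      rwa [hXf i] at this
    show PP μ ε T (S n) (path r n) ((r n).1) (Up n)
    exact upd_spec hPPex
  have hIIOK : ∀ n, Q n → IIOK r n := by
    intro n hQn
    obtain ⟨V, X, p1, p2, p3, p4, p5, p6, p7, p8⟩ := hQn
    have hpos : (0 : ℝ) < ∑' i, ((selq (V i) (X i) (Up n).1 : ℚ) : ℝ) :=
      Summable.tsum_pos p7 (fun i => by exact_mod_cast (p6 i).le) 0 (by exact_mod_cast p6 0)
    have hlt : (0 : ℝ) < ((if (Up n).1 then (r n).1.2 else (r n).1.1 : ℚ) : ℝ) := lt_trans hpos p8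
    have hselr : sel r n = (if (Up n).1 then (r n).1.2 else (r n).1.1) := by
      unfold sel valI; rw [hbit n]
    unfold IIOK
    rw [hselr]
    intro h0
    rw [h0] at hlt
    simp at hlt
  by_cases hall : ∀ n, IOK μ sv r n
  · have hQall : ∀ n, Q n := by
      intro n
      induction n using Nat.strong_induction_on with
      | _ n ih => exact hQstep n (fun m _ => hall m) ih
    right
    refine ⟨fun n => ⟨hall n, hIIOK n (hQall n)⟩, ?_⟩
    rw [Set.mem_iInter]
    intro i
    have hQbelow : ∀ k : ℕ, ∀ j, j < k → Q j := fun k j _ => hQall j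
    have hconsi : ConsII (T i) (ri i) := fun k =>
      ((hinv (k + 1) (hQbelow (k + 1)) i).2.2.1) k (Nat.lt_succ_self k)
    rcases hTw i (ri i) hconsi with ⟨nn, -, hnn⟩ | ⟨-, hmem⟩
    · exact absurd (((hinv (nn + 1) (hQbelow (nn + 1)) i).2.2.2) nn (Nat.lt_succ_self nn)) hnn
    · have hbeq : bits (ri i) = bits r :=
        funext fun k => ((hinv (k + 1) (hQbelow (k + 1)) i).2.1) k (Nat.lt_succ_self k)
      rwa [hbeq] at hmem
  · left
    push_neg at hall
    have hn0 := Nat.find_spec hall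
    have hQbelow : ∀ k, k < Nat.find hall → Q k := by
      intro k
      induction k using Nat.strong_induction_on with
      | _ k ih =>
        intro hk
        exact hQstep k
          (fun j hj => not_not.mp (Nat.find_min hall (lt_of_le_of_lt hj hk)))
          (fun j hj => ih j hj (hj.trans hk))
    exact ⟨Nat.find hall,
      fun m hm => ⟨not_not.mp (Nat.find_min hall hm), hIIOK m (hQbelow m hm)⟩, hn0⟩

end MeasureGame
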